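/- Let (E, ρ) be a q-polymatroid with denominator μ and V a subspace of E. If I is a μ-basis of V, i.e., a μ-independent subspace of V of maximal dimension among μ-independent subspaces of V, then ρ(I) = ρ(V). In particular, all μ-bases of V have the same rank value. -/

import Mathlib

open Module

/-- A subspace `I` is `μ`-independent in the `q`-polymatroid `(E, ρ)` if
`ρ(J) ≥ dim J / μ` for all subspaces `J ≤ I`. -/
def IsMuIndep {𝔽 E : Type*} [Field 𝔽] [AddCommGroup E] [Module 𝔽 E]
    (μ : ℚ) (ρ : Submodule 𝔽 E → ℚ) (I : Submodule 𝔽 E) : Prop :=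
  ∀ J ≤ I, (finrank 𝔽 J : ℚ) / μ ≤ ρ J

theorem qpm_basis_rank
    {𝔽 E : Type*} [Field 𝔽] [Fintype 𝔽] [AddCommGroup E] [Module 𝔽 E]
    [FiniteDimensional 𝔽 E] (ρ : Submodule 𝔽 E → ℚ)
    (hR1 : ∀ V : Submodule 𝔽 E, 0 ≤ ρ V ∧ ρ V ≤ (finrank 𝔽 V : ℚ))
    (hR2 : ∀ V W : Submodule 𝔽 E, V ≤ W → ρ V ≤ ρ W)
    (hR3 : ∀ V W : Submodule 𝔽 E, ρ (V ⊔ W) + ρ (V ⊓ W) ≤ ρ V + ρ W)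
    (μ : ℚ) (hμ : 0 < μ) (hden : ∀ V : Submodule 𝔽 E, ∃ n : ℕ, μ * ρ V = n)
    (V I : Submodule 𝔽 E) (hIV : I ≤ V) (hI : IsMuIndep μ ρ I)
    (hmax : ∀ J ≤ V, IsMuIndep μ ρ J → finrank 𝔽 J ≤ finrank 𝔽 I) :
    ρ I = ρ V := by
  by_contra hne
  have hle : ρ I ≤ ρ V := hR2 I V hIV
  have hlt : ρ I < ρ V := lt_of_le_of_ne hle hne
  -- there exists x ∈ V with ρ (I ⊔ span{x}) > ρ I
  have hx : ∃ x ∈ V, ρ I < ρ (I ⊔ Submodule.span 𝔽 {x}) := by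
    by_contra hall
    push_neg at hall
    -- show ρ V ≤ ρ I
    classical
    have key : ∀ s : Finset E, ↑s ⊆ (V : Set E) →
        ρ (I ⊔ Submodule.span 𝔽 (s : Set E)) ≤ ρ I := by
      intro s
      induction s using Finset.induction with
      | empty => intro _; simp
      | @insert a s ha ih =>
        intro hsub
        have haV : a ∈ V := hsub (Finset.mem_insert_self a s)
        have hsV : ↑s ⊆ (V : Set E) := by
          intro y hy; exact hsub (Finset.mem_insert_of_mem hy)
        have h1 := hall a haV
        have h2 := ih hsV
        have hsp : (Submodule.span 𝔽 (↑(insert a s) : Set E)) =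
            Submodule.span 𝔽 {a} ⊔ Submodule.span 𝔽 (s : Set E) := by
          rw [Finset.coe_insert, Submodule.span_insert]
        have hsup : I ⊔ Submodule.span 𝔽 (↑(insert a s) : Set E) =
            (I ⊔ Submodule.span 𝔽 {a}) ⊔ (I ⊔ Submodule.span 𝔽 (s : Set E)) := by
          rw [hsp]; rw [sup_sup_distrib_left]
        have hinf : ρ I ≤ ρ ((I ⊔ Submodule.span 𝔽 {a}) ⊓ (I ⊔ Submodule.span 𝔽 (s : Set E))) :=
          hR2 _ _ (le_inf le_sup_left le_sup_left)
        have := hR3 (I ⊔ Submodule.span 𝔽 {a}) (I ⊔ Submodule.span 𝔽 (s : Set E))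
        rw [hsup]
        linarith
    obtain ⟨s, hs⟩ := (IsNoetherian.noetherian V : V.FG)
    have hsV : ↑s ⊆ (V : Set E) := by rw [← hs]; exact Submodule.subset_span
    have : ρ (I ⊔ Submodule.span 𝔽 (s : Set E)) ≤ ρ I := key s hsV
    rw [hs] at this
    have : ρ V ≤ ρ I := le_trans (hR2 V (I ⊔ V) le_sup_right) this
    linarith
  obtain ⟨x, hxV, hxρ⟩ := hx
  set I' := I ⊔ Submodule.span 𝔽 {x} with hI'def
  have hxI : x ∉ I := by
    intro hxI
    have : Submodule.span 𝔽 {x} ≤ I := by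
      rw [Submodule.span_singleton_le_iff_mem]; exact hxI
    have : I' = I := sup_eq_left.mpr this
    rw [this] at hxρ; exact lt_irrefl _ hxρ
  have hx0 : x ≠ 0 := fun h => hxI (h ▸ I.zero_mem)
  -- dim I' = dim I + 1
  have hinfbot : Submodule.span 𝔽 {x} ⊓ I = ⊥ := by
    rw [eq_bot_iff]
    intro y hy
    obtain ⟨hy1, hy2⟩ := hy
    obtain ⟨c, hc⟩ := Submodule.mem_span_singleton.mp hy1
    rcases eq_or_ne c 0 with rfl | hc0
    · simp [← hc]
    · exfalso; apply hxI
      have : c⁻¹ • y ∈ I := I.smul_mem _ hy2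
      rwa [← hc, smul_smul, inv_mul_cancel₀ hc0, one_smul] at this
  have hdim : finrank 𝔽 I' = finrank 𝔽 I + 1 := by
    have h1 : finrank 𝔽 (Submodule.span 𝔽 ({x} : Set E)) = 1 :=
      finrank_span_singleton hx0
    have := Submodule.finrank_sup_add_finrank_inf_eq (Submodule.span 𝔽 ({x} : Set E)) I
    rw [hinfbot, h1] at this
    simp only [finrank_bot, add_zero] at this
    rw [hI'def, sup_comm]
    omega
  -- integrality: ρ I + 1/μ ≤ ρ I'
  have hgap : ρ I + 1 / μ ≤ ρ I' := by
    obtain ⟨m, hm⟩ := hden I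
    obtain ⟨n, hn⟩ := hden I'
    have hmn : (m : ℚ) < n := by
      rw [← hm, ← hn]
      exact (mul_lt_mul_iff_right₀ hμ).mpr hxρ
    have hmn' : (m : ℚ) + 1 ≤ n := by
      have : m < n := by exact_mod_cast hmn
      exact_mod_cast this
    have h1 : ρ I = m / μ := by rw [eq_div_iff hμ.ne', mul_comm]; exact hm
    have h2 : ρ I' = n / μ := by rw [eq_div_iff hμ.ne', mul_comm]; exact hn
    rw [h1, h2, ← add_div]
    gcongr
  -- I' is μ-independent
  have hI' : IsMuIndep μ ρ I' := by
    intro J hJ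
    by_cases hJI : J ≤ I
    · exact hI J hJI
    · -- J ⊔ I = I'
      have hJIle : J ⊔ I ≤ I' := sup_le hJ le_sup_left
      have hIlt : I < J ⊔ I := lt_of_le_of_ne le_sup_right
        (fun h => hJI (h ▸ le_sup_left))
      have hJIeq : J ⊔ I = I' := by
        apply le_antisymm hJIle
        have h1 : finrank 𝔽 I < finrank 𝔽 ↥(J ⊔ I) := Submodule.finrank_lt_finrank_of_lt hIlt
        have h2 : finrank 𝔽 ↥(J ⊔ I) ≤ finrank 𝔽 I' := Submodule.finrank_mono hJIle
        exact (Submodule.eq_of_le_of_finrank_le hJIle (by omega)).ge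
      have hdimJ : finrank 𝔽 ↥(J ⊓ I) + 1 = finrank 𝔽 J := by
        have := Submodule.finrank_sup_add_finrank_inf_eq J I
        rw [hJIeq, hdim] at this
        omega
      have hJinf : ((finrank 𝔽 ↥(J ⊓ I) : ℚ)) / μ ≤ ρ (J ⊓ I) := hI _ inf_le_right
      have hsm := hR3 J I
      rw [hJIeq] at hsm
      have : (finrank 𝔽 J : ℚ) = (finrank 𝔽 ↥(J ⊓ I) : ℚ) + 1 := by exact_mod_cast hdimJ.symm
      rw [this, add_div]
      clear hJI
      linarith
  have hI'V : I' ≤ V := sup_le hIV ((Submodule.span_singleton_le_iff_mem x V).mpr hxV)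
  have := hmax I' hI'V hI'
  omega
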